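/- Let N ≥ 0 and let ν_{j,N} = -cos((2j+1)π/(2N+2)) for j = 0, 1, ..., N be the Chebyshev points of the first kind. Then for every j = 0, ..., N, the barycentric weight w_{j,N} = Π_{n=0, n≠j}^{N} (ν_{j,N} - ν_{n,N})^{-1} satisfies w_{j,N} = (-1)^{N-j} · (2^N/(N+1)) · sin((2j+1)π/(2N+2)). -/

import Mathlib

open Real

open Polynomial Polynomial.Chebyshev in
lemma T_natDegree_le_and_coeff (n : ℕ) :
    (T ℝ ((n : ℤ) + 1)).natDegree ≤ n + 1 ∧ (T ℝ ((n : ℤ) + 1)).coeff (n + 1) = 2 ^ n := by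
  induction n using Nat.twoStepInduction with
  | zero => norm_num [T_one]
  | one =>
    rw [show ((1:ℕ) : ℤ) + 1 = 2 by norm_num, T_two]
    refine ⟨le_trans (natDegree_sub_le _ _) ?_, by simp [coeff_sub, coeff_one]⟩
    simp only [natDegree_one, max_le_iff]
    exact ⟨le_trans natDegree_mul_le (by simp), by omega⟩
  | more n ihn ihn1 =>
    have hrw : ((n + 2 : ℕ) : ℤ) + 1 = ((n:ℤ) + 1) + 2 := by push_cast; ring
    have h1 : ((n:ℤ) + 1) + 1 = ((n + 1 : ℕ) : ℤ) + 1 := by push_cast; ring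
    rw [hrw, T_add_two, h1]
    constructor
    · refine le_trans (natDegree_sub_le _ _) ?_
      rw [max_le_iff]
      refine ⟨le_trans natDegree_mul_le ?_, le_trans ihn.1 (by omega)⟩
      have h2X : (2 * X : ℝ[X]).natDegree ≤ 1 := le_trans natDegree_mul_le (by simp)
      calc (2*X : ℝ[X]).natDegree + (T ℝ (((n+1:ℕ):ℤ) + 1)).natDegree
          ≤ 1 + (n + 1 + 1) := add_le_add h2X ihn1.1
        _ ≤ n + 2 + 1 := by omega
    · rw [coeff_sub, mul_assoc]
      rw [show (n + 2 + 1) = (n + 1 + 1) + 1 from rfl]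
      rw [coeff_ofNat_mul, coeff_X_mul, ihn1.2,
        coeff_eq_zero_of_natDegree_lt (lt_of_le_of_lt ihn.1 (by omega))]
      ring

open Polynomial Polynomial.Chebyshev Finset in
/-- explicit formula for the barycentric weights associated with the
Chebyshev points of the first kind. -/
theorem stmt_9 (N : ℕ) (ν : Fin (N + 1) → ℝ)
    (hν : ∀ j, ν j = -Real.cos ((2 * (j : ℝ) + 1) * π / (2 * (N : ℝ) + 2)))
    (j : Fin (N + 1)) :
    (∏ n ∈ Finset.univ.erase j, (ν j - ν n)⁻¹) =
      (-1 : ℝ) ^ (N - (j : ℕ)) * (2 ^ N / (N + 1)) *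
        Real.sin ((2 * (j : ℝ) + 1) * π / (2 * (N : ℝ) + 2)) := by
  classical
  have hπ := Real.pi_pos
  have hDpos : (0:ℝ) < 2 * (N:ℝ) + 2 := by positivity
  have hD0 : (2 * (N:ℝ) + 2) ≠ 0 := ne_of_gt hDpos
  set θ : Fin (N+1) → ℝ := fun n => (2 * (n:ℝ) + 1) * π / (2 * (N:ℝ) + 2) with hθdef
  have hθpos : ∀ n, 0 < θ n := fun n => div_pos (by positivity) hDpos
  have hθlt : ∀ n, θ n < π := by
    intro n
    have hn : (n:ℝ) ≤ N := by exact_mod_cast Fin.is_le n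
    rw [hθdef]
    rw [div_lt_iff₀ hDpos]
    nlinarith
  have hν' : ∀ n, ν n = Real.cos (π - θ n) := by
    intro n
    rw [hν n, Real.cos_pi_sub, hθdef]
  have hang : ∀ n : Fin (N+1), ((N:ℝ) + 1) * (π - θ n)
      = ((N - (n:ℕ) : ℕ) : ℝ) * π + π / 2 := by
    intro n
    have hn : (n:ℕ) ≤ N := Fin.is_le n
    rw [Nat.cast_sub hn, hθdef]
    field_simp
    ring
  have hinj : Function.Injective ν := by
    intro a b hab
    rw [hν' a, hν' b] at hab
    have h1 : π - θ a ∈ Set.Icc 0 π := ⟨by linarith [hθlt a], by linarith [hθpos a]⟩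
    have h2 : π - θ b ∈ Set.Icc 0 π := ⟨by linarith [hθlt b], by linarith [hθpos b]⟩
    have hth : θ a = θ b := by
      have := Real.injOn_cos h1 h2 hab
      linarith
    rw [hθdef] at hth
    simp only at hth
    have hab' : ((a:ℕ):ℝ) = ((b:ℕ):ℝ) := by
      rw [div_left_inj' hD0] at hth
      have := mul_right_cancel₀ Real.pi_ne_zero hth
      linarith
    exact Fin.ext (Nat.cast_injective hab')
  set P := Lagrange.nodal Finset.univ ν with hP
  have hPdeg : P.natDegree = N + 1 := by
    rw [hP, Lagrange.natDegree_nodal]; simp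
  have hmonic : P.Monic := Lagrange.nodal_monic
  have hTroot : ∀ n : Fin (N+1), (T ℝ ((N:ℤ)+1)).eval (ν n) = 0 := by
    intro n
    rw [hν' n, T_real_cos]
    have hcast : (((N:ℤ)+1 : ℤ) : ℝ) * (π - θ n) = ((N:ℝ)+1) * (π - θ n) := by push_cast; ring
    rw [hcast, hang n, Real.cos_add_pi_div_two, Real.sin_nat_mul_pi, neg_zero]
  have key : T ℝ ((N:ℤ)+1) = C ((2:ℝ)^N) * P := by
    obtain ⟨hd, hc⟩ := T_natDegree_le_and_coeff N
    have hQ : (T ℝ ((N:ℤ)+1) - C ((2:ℝ)^N) * P) = 0 := by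
      apply eq_zero_of_natDegree_lt_card_of_eval_eq_zero _ hinj
      · intro i
        simp [eval_sub, hTroot i, hP, Lagrange.eval_nodal_at_node (Finset.mem_univ i)]
      · rw [Fintype.card_fin]
        have hle : (T ℝ ((N:ℤ)+1) - C ((2:ℝ)^N) * P).natDegree ≤ N := by
          rw [natDegree_le_iff_coeff_eq_zero]
          intro m hm
          by_cases hm1 : m = N + 1
          · subst hm1
            have hP1 : P.coeff (N+1) = 1 := by
              have := hmonic.coeff_natDegree
              rwa [hPdeg] at this
            rw [coeff_sub, coeff_C_mul, hc, hP1]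
            ring
          · have hm2 : N + 1 < m := by omega
            rw [coeff_sub, coeff_C_mul,
              coeff_eq_zero_of_natDegree_lt (lt_of_le_of_lt hd hm2),
              coeff_eq_zero_of_natDegree_lt (by omega : P.natDegree < m)]
            ring
        omega
    exact sub_eq_zero.mp hQ
  have hder := congrArg derivative key
  rw [T_derivative_eq_U, derivative_C_mul,
    show ((N:ℤ)+1)-1 = (N:ℤ) by ring] at hder
  have heval := congrArg (eval (ν j)) hder
  rw [eval_mul, eval_intCast, eval_mul, eval_C] at heval
  have hprod : eval (ν j) (derivative P) = ∏ n ∈ Finset.univ.erase j, (ν j - ν n) := by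
    rw [hP, Lagrange.eval_nodal_derivative_eval_node_eq (Finset.mem_univ j), Lagrange.eval_nodal]
  rw [hprod] at heval
  push_cast at heval
  -- heval : ((N:ℝ)+1) * eval (ν j) (U ℝ N) = 2^N * ∏ ...
  have hsθ : 0 < Real.sin (θ j) := Real.sin_pos_of_pos_of_lt_pi (hθpos j) (hθlt j)
  have hU : eval (ν j) (U ℝ (N:ℤ)) * Real.sin (π - θ j)
      = Real.sin ((((N:ℤ):ℝ) + 1) * (π - θ j)) := by
    rw [hν' j]; exact U_real_cos (π - θ j) (N:ℤ)
  have hsinval : Real.sin ((((N:ℤ):ℝ) + 1) * (π - θ j)) = (-1:ℝ)^(N - (j:ℕ)) := by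
    rw [show (((N:ℤ):ℝ) + 1) = (N:ℝ) + 1 by push_cast; ring, hang j,
      Real.sin_add_pi_div_two]
    have := Real.cos_nat_mul_pi_sub 0 (N - (j:ℕ))
    simpa using this
  have hspi : Real.sin (π - θ j) = Real.sin (θ j) := Real.sin_pi_sub _
  set D : ℝ := ∏ n ∈ Finset.univ.erase j, (ν j - ν n) with hDdef
  set s : ℝ := Real.sin (θ j) with hsdef
  set e : ℝ := (-1:ℝ)^(N - (j:ℕ)) with hedef
  have he : e * e = 1 := by
    rw [hedef, ← pow_add]
    exact Even.neg_one_pow ⟨N - (j:ℕ), rfl⟩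
  have hkey : ((N:ℝ)+1) * e = 2^N * D * s := by
    calc ((N:ℝ)+1) * e = ((N:ℝ)+1) * (eval (ν j) (U ℝ (N:ℤ)) * Real.sin (π - θ j)) := by
          rw [hU, hsinval]
      _ = (((N:ℝ)+1) * eval (ν j) (U ℝ (N:ℤ))) * Real.sin (π - θ j) := by ring
      _ = 2^N * D * s := by rw [heval, hspi]
  have hs0 : s ≠ 0 := ne_of_gt hsθ
  have hN1 : ((N:ℝ)+1) ≠ 0 := by positivity
  have he0 : e ≠ 0 := by
    rw [hedef]; exact pow_ne_zero _ (by norm_num)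
  have h2N : (2:ℝ)^N ≠ 0 := by positivity
  have hDval : D = ((N:ℝ)+1) * e / (2^N * s) := by
    rw [eq_div_iff (mul_ne_zero h2N hs0)]
    linarith [hkey]
  show (∏ n ∈ Finset.univ.erase j, (ν j - ν n)⁻¹) = e * (2 ^ N / ((N:ℝ) + 1)) * s
  have hfold : (∏ n ∈ Finset.univ.erase j, (ν j - ν n)⁻¹) = D⁻¹ := by
    rw [hDdef]; exact Finset.prod_inv_distrib _
  rw [hfold, hDval, inv_div, div_eq_iff (mul_ne_zero hN1 he0)]
  calc (2:ℝ)^N * s = (e*e) * 2^N * s * (((N:ℝ)+1) * ((N:ℝ)+1)⁻¹) := by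
        rw [he, mul_inv_cancel₀ hN1]; ring
    _ = _ := by ring
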